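/- On the Bakhvalov-type mesh the fine-region mesh widths satisfy the explicit lower bound h_{N/2+i} ≥ (σε/α)·1/(i+1) for every integer i with 1 ≤ i ≤ N/2. -/

import Mathlib

private lemma bakh_aux (A B c : ℝ) (hA : 0 < A) (hB : 0 < B) (hc : 0 < c)
    (h : A * (c + 1) ≤ B * c) :
    1 / (c + 1) ≤ -Real.log A - -Real.log B := by
  have hlog : Real.log (A / B) ≤ A / B - 1 :=
    Real.log_le_sub_one_of_pos (by positivity)
  rw [Real.log_div hA.ne' hB.ne'] at hlog
  have hc1 : (0:ℝ) < c + 1 := by linarith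
  have hAB : A / B ≤ c / (c + 1) := by
    rw [div_le_div_iff₀ hB hc1]; linarith
  have he : 1 - c / (c + 1) = 1 / (c + 1) := by field_simp; ring
  linarith

/-- On the Bakhvalov-type mesh (generated by
`φ(t) = −ln(1 − 2(1 − ε)t)`) the fine-region mesh widths satisfy the explicit
lower bound `h_{N/2+i} ≥ (σε/α)·1/(i+1)` for every integer `1 ≤ i ≤ N/2`. -/
theorem bakhvalov_type_mesh_width_lower_bound
    (α σ ε : ℝ) (hα : 0 < α) (hσ : 0 < σ) (hε : 0 < ε)
    (N : ℕ) (hNeven : Even N) (hN4 : 4 ≤ N) (hNε : (N:ℝ) * ε ≤ 1) :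
    ∀ i : ℕ, 1 ≤ i → i ≤ N / 2 →
      (σ * ε / α) * (1 / ((i:ℝ) + 1))
        ≤ (σ * ε / α) *
            ((-Real.log (1 - 2 * (1 - ε) * (1 - (((N / 2 + i : ℕ):ℝ) - 1) / N)))
              - (-Real.log (1 - 2 * (1 - ε) * (1 - ((N / 2 + i : ℕ):ℝ) / N)))) := by
  intro i hi1 hi2
  obtain ⟨m, hm⟩ := hNeven
  have hNd : N / 2 = m := by omega
  rw [hNd]
  have hm4 : 2 ≤ m := by omega
  have him : i ≤ m := by omega
  have h1 : (1:ℝ) ≤ i := by exact_mod_cast hi1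
  have h2 : (i:ℝ) ≤ m := by exact_mod_cast him
  have hm2 : (2:ℝ) ≤ m := by exact_mod_cast hm4
  have hnm : (N:ℝ) = 2 * m := by rw [hm]; push_cast; ring
  have hm0 : (0:ℝ) < m := by linarith
  have hεm : 2 * (m:ℝ) * ε ≤ 1 := by rw [hnm] at hNε; linarith
  have hε4 : ε ≤ 1 / 4 := by nlinarith
  push_cast
  rw [hnm]
  have e1 : 1 - 2 * (1 - ε) * (1 - ((m:ℝ) + i - 1) / (2 * m))
      = (2 * ((i:ℝ) - 1) + 2 * ε * ((m:ℝ) - i + 1)) / (2 * m) := by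
    field_simp; ring
  have e2 : 1 - 2 * (1 - ε) * (1 - ((m:ℝ) + i) / (2 * m))
      = (2 * (i:ℝ) + 2 * ε * ((m:ℝ) - i)) / (2 * m) := by
    field_simp; ring
  rw [e1, e2]
  apply mul_le_mul_of_nonneg_left _ (by positivity)
  have hA : 0 < (2 * ((i:ℝ) - 1) + 2 * ε * ((m:ℝ) - i + 1)) / (2 * m) := by
    apply div_pos _ (by linarith)
    nlinarith [mul_pos hε (show (0:ℝ) < (m:ℝ) - i + 1 by linarith)]
  have hB : 0 < (2 * (i:ℝ) + 2 * ε * ((m:ℝ) - i)) / (2 * m) := by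
    apply div_pos _ (by linarith)
    nlinarith [mul_nonneg hε.le (show (0:ℝ) ≤ (m:ℝ) - i by linarith)]
  apply bakh_aux _ _ _ hA hB (by linarith)
  rw [div_mul_eq_mul_div, div_mul_eq_mul_div,
    div_le_div_iff₀ (by linarith) (by linarith)]
  nlinarith [hεm, hε4, hm0, h1, h2]
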